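/- Under the kinked rate model with S̄·u* − B̄ > 0, ℓ > 1, and r_slope1 < (u*/(1−u*))·r_slope2, the two critical multipliers satisfy λ² < λ¹, where λ¹ = ℓ·s − (ℓ−1)·(r_base + r_slope1 + (S̄·u*−B̄)·r_slope1/(S̄·u*)) and λ² = ℓ·s − (ℓ−1)·(r_base + r_slope1 + (S̄·u*−B̄)·r_slope2/(S̄·(1−u*))). -/
import Mathlib


/-- Under the kinked rate model with S̄·u* − B̄ > 0, ℓ > 1, and
r_slope1 < (u*/(1−u*))·r_slope2, the critical multipliers satisfy λ² < λ¹. -/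
theorem kinked_rate_critical_multipliers_ordered
    (s ℓ Sbar Bbar us rbase rslope1 rslope2 : ℝ)
    (hℓ : 1 < ℓ) (hS : 0 < Sbar) (hB : 0 ≤ Bbar)
    (hus0 : 0 < us) (hus1 : us < 1)
    (hrb : 0 ≤ rbase) (hr1 : 0 < rslope1) (hr2 : 0 < rslope2)
    (hbelow : 0 < Sbar * us - Bbar)
    (hslopes : rslope1 < (us / (1 - us)) * rslope2) :
    let lam1 : ℝ := ℓ * s - (ℓ - 1) *
      (rbase + rslope1 + (Sbar * us - Bbar) * rslope1 / (Sbar * us))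
    let lam2 : ℝ := ℓ * s - (ℓ - 1) *
      (rbase + rslope1 + (Sbar * us - Bbar) * rslope2 / (Sbar * (1 - us)))
    lam2 < lam1 := by
  intro lam1 lam2
  have h1u : 0 < 1 - us := by linarith
  have hkey : rslope1 / (Sbar * us) < rslope2 / (Sbar * (1 - us)) := by
    rw [div_lt_div_iff₀ (by positivity) (by positivity)]
    have := hslopes
    rw [div_mul_eq_mul_div, lt_div_iff₀ h1u] at this
    nlinarith [hS, this]
  have h2 : (Sbar * us - Bbar) * rslope1 / (Sbar * us) <
      (Sbar * us - Bbar) * rslope2 / (Sbar * (1 - us)) := by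
    rw [mul_div_assoc, mul_div_assoc]
    exact mul_lt_mul_of_pos_left hkey hbelow
  have hℓ1 : 0 < ℓ - 1 := by linarith
  simp only [lam1, lam2]
  nlinarith [mul_lt_mul_of_pos_left h2 hℓ1]
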